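/- Let X be a compact metric space and Γ : C(X) → ℝ a pressure function. Then for every φ ∈ C(X) the supremum of 𝔥(μ) + ∫ φ dμ over μ ∈ 𝒫(X) is attained and Γ(φ) = max_{μ ∈ 𝒫(X)} { 𝔥(μ) + ∫ φ dμ }. -/

import Mathlib

open MeasureTheory Filter Topology Set

/-- A pressure function on `C(X,ℝ)`: monotone, translation invariant and convex. -/
def IsPressureFunction {X : Type*} [TopologicalSpace X] [CompactSpace X]
    (Γ : C(X, ℝ) → ℝ) : Prop :=
  (∀ φ ψ : C(X, ℝ), (∀ x, φ x ≤ ψ x) → Γ φ ≤ Γ ψ) ∧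
  (∀ (φ : C(X, ℝ)) (c : ℝ), Γ (φ + ContinuousMap.const X c) = Γ φ + c) ∧
  ConvexOn ℝ Set.univ Γ

section Subgrad
variable {Y : Type*} [TopologicalSpace Y] [CompactSpace Y]

theorem exists_subgradient (Γ : C(Y, ℝ) → ℝ) (hΓ : IsPressureFunction Γ) (φ : C(Y, ℝ)) :
    ∃ L : C(Y, ℝ) →ₗ[ℝ] ℝ, ∀ χ, L χ ≤ Γ (φ + χ) - Γ φ := by
  obtain ⟨hmono, htrans, hconv⟩ := hΓ
  have hlip : ∀ f g : C(Y, ℝ), Γ f ≤ Γ g + ‖f - g‖ := by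
    intro f g
    have h1 : ∀ x, f x ≤ (g + ContinuousMap.const Y ‖f - g‖) x := by
      intro x
      have := ContinuousMap.norm_coe_le_norm (f - g) x
      simp only [ContinuousMap.add_apply, ContinuousMap.const_apply]
      have h2 : |f x - g x| ≤ ‖f - g‖ := by
        simpa using this
      have := abs_le.1 h2
      linarith [this.2]
    calc Γ f ≤ Γ (g + ContinuousMap.const Y ‖f - g‖) := hmono _ _ h1
      _ = Γ g + ‖f - g‖ := htrans _ _
  set q : C(Y, ℝ) → ℝ → ℝ := fun χ t => (Γ (φ + t • χ) - Γ φ) / t with hq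
  have hlow : ∀ (χ : C(Y, ℝ)) (t : ℝ), 0 < t → -‖χ‖ ≤ q χ t := by
    intro χ t ht
    have h1 : Γ φ ≤ Γ (φ + t • χ) + ‖φ - (φ + t • χ)‖ := hlip _ _
    have h2 : ‖φ - (φ + t • χ)‖ ≤ t * ‖χ‖ := by
      rw [show φ - (φ + t • χ) = -(t • χ) by abel, norm_neg]
      calc ‖t • χ‖ ≤ ‖t‖ * ‖χ‖ := norm_smul_le t χ
        _ = t * ‖χ‖ := by rw [Real.norm_eq_abs, abs_of_pos ht]
    rw [hq, le_div_iff₀ ht]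
    nlinarith [norm_nonneg χ]
  have hbdd : ∀ χ : C(Y, ℝ), BddBelow (q χ '' Ioi 0) := by
    intro χ
    exact ⟨-‖χ‖, by rintro _ ⟨t, ht, rfl⟩; exact hlow χ t ht⟩
  have hne : ∀ χ : C(Y, ℝ), (q χ '' Ioi 0).Nonempty :=
    fun χ => ⟨q χ 1, 1, by norm_num, rfl⟩
  set p : C(Y, ℝ) → ℝ := fun χ => sInf (q χ '' Ioi 0) with hp
  have hple : ∀ (χ : C(Y, ℝ)) (t : ℝ), 0 < t → p χ ≤ q χ t :=
    fun χ t ht => csInf_le (hbdd χ) ⟨t, ht, rfl⟩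
  have hmonoq : ∀ (χ : C(Y, ℝ)) (s t : ℝ), 0 < s → s ≤ t → q χ s ≤ q χ t := by
    intro χ s t hs hst
    have ht : 0 < t := lt_of_lt_of_le hs hst
    have key : Γ (φ + s • χ) ≤ (s/t) * Γ (φ + t • χ) + (1 - s/t) * Γ φ := by
      have ha : (0:ℝ) ≤ s/t := by positivity
      have hb : (0:ℝ) ≤ 1 - s/t := by
        have : s/t ≤ 1 := by rw [div_le_one ht]; exact hst
        linarith
      have hab : s/t + (1 - s/t) = 1 := by ring
      have := hconv.2 (Set.mem_univ (φ + t • χ)) (Set.mem_univ φ) ha hb hab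
      have heq : (s/t) • (φ + t • χ) + (1 - s/t) • φ = φ + s • χ := by
        have ht' : t ≠ 0 := ne_of_gt ht
        ext x
        simp only [ContinuousMap.add_apply, ContinuousMap.smul_apply, smul_eq_mul]
        field_simp
        ring
      rw [heq] at this
      simpa [smul_eq_mul] using this
    have key2 : t * Γ (φ + s • χ) ≤ s * Γ (φ + t • χ) + (t - s) * Γ φ := by
      have ht' : t ≠ 0 := ne_of_gt ht
      calc t * Γ (φ + s • χ) ≤ t * ((s/t) * Γ (φ + t • χ) + (1 - s/t) * Γ φ) :=
            mul_le_mul_of_nonneg_left key ht.le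
        _ = s * Γ (φ + t • χ) + (t - s) * Γ φ := by field_simp
    rw [hq]
    rw [div_le_div_iff₀ hs ht]
    nlinarith [key2]
  have hsub : ∀ χ₁ χ₂ : C(Y, ℝ), p (χ₁ + χ₂) ≤ p χ₁ + p χ₂ := by
    intro χ₁ χ₂
    refine le_of_forall_pos_le_add ?_
    intro ε hε
    obtain ⟨y₁, ⟨t₁, ht₁, rfl⟩, hy₁⟩ := exists_lt_of_csInf_lt (hne χ₁)
      (show p χ₁ < p χ₁ + ε/2 by linarith)
    obtain ⟨y₂, ⟨t₂, ht₂, rfl⟩, hy₂⟩ := exists_lt_of_csInf_lt (hne χ₂)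
      (show p χ₂ < p χ₂ + ε/2 by linarith)
    have ht₁' : (0:ℝ) < t₁ := ht₁
    have ht₂' : (0:ℝ) < t₂ := ht₂
    set t := min t₁ t₂ / 2 with htdef
    have ht : 0 < t := by positivity
    have h2t₁ : 2 * t ≤ t₁ := by
      have := min_le_left t₁ t₂; rw [htdef]; linarith
    have h2t₂ : 2 * t ≤ t₂ := by
      have := min_le_right t₁ t₂; rw [htdef]; linarith
    have hmid : q (χ₁ + χ₂) t ≤ q χ₁ (2*t) + q χ₂ (2*t) := by
      have key : 2 * Γ (φ + t • (χ₁ + χ₂)) ≤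
          Γ (φ + (2*t) • χ₁) + Γ (φ + (2*t) • χ₂) := by
        have := hconv.2 (Set.mem_univ (φ + (2*t) • χ₁)) (Set.mem_univ (φ + (2*t) • χ₂))
          (by norm_num : (0:ℝ) ≤ 1/2) (by norm_num : (0:ℝ) ≤ 1/2) (by norm_num)
        have heq : (1/2:ℝ) • (φ + (2*t) • χ₁) + (1/2:ℝ) • (φ + (2*t) • χ₂)
            = φ + t • (χ₁ + χ₂) := by
          ext x
          simp only [ContinuousMap.add_apply, ContinuousMap.smul_apply, smul_eq_mul]
          ring
        rw [heq] at this
        simp only [smul_eq_mul] at this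
        linarith
      have h2tpos : (0:ℝ) < 2*t := by linarith
      simp only [hq]
      rw [← add_div, div_le_div_iff₀ ht h2tpos]
      nlinarith [mul_le_mul_of_nonneg_right key ht.le]
    calc p (χ₁ + χ₂) ≤ q (χ₁ + χ₂) t := hple _ _ ht
      _ ≤ q χ₁ (2*t) + q χ₂ (2*t) := hmid
      _ ≤ q χ₁ t₁ + q χ₂ t₂ := add_le_add
          (hmonoq _ _ _ (by linarith) h2t₁) (hmonoq _ _ _ (by linarith) h2t₂)
      _ ≤ p χ₁ + p χ₂ + ε := by linarith
  have hscale : ∀ (c : ℝ), 0 < c → ∀ χ : C(Y, ℝ), p (c • χ) = c * p χ := by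
    intro c hc χ
    have hqc : ∀ t : ℝ, 0 < t → q (c • χ) t = c * q χ (t * c) := by
      intro t ht
      rw [hq]
      simp only []
      have : φ + t • (c • χ) = φ + (t * c) • χ := by rw [smul_smul]
      rw [this]
      field_simp
    apply le_antisymm
    · have hlb : ∀ s : ℝ, 0 < s → p (c • χ) ≤ c * q χ s := by
        intro s hs
        have h1 : p (c • χ) ≤ q (c • χ) (s / c) := hple _ _ (div_pos hs hc)
        rw [hqc _ (div_pos hs hc), div_mul_cancel₀ s (ne_of_gt hc)] at h1
        exact h1
      have : p (c • χ) / c ≤ p χ := by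
        apply le_csInf (hne χ)
        rintro _ ⟨s, hs, rfl⟩
        rw [div_le_iff₀ hc]
        have := hlb s hs
        linarith [hlb s hs]
      rw [div_le_iff₀ hc] at this
      linarith
    · apply le_csInf (hne (c • χ))
      rintro _ ⟨t, ht, rfl⟩
      rw [hqc t ht]
      have := hple χ (t * c) (mul_pos ht hc)
      nlinarith
  have hp0 : p 0 = 0 := by
    have : q 0 '' Ioi 0 = {0} := by
      apply Set.eq_singleton_iff_nonempty_unique_mem.2
      constructor
      · exact hne 0
      · rintro _ ⟨t, ht, rfl⟩
        rw [hq]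
        simp
    simp only [hp]
    rw [this, csInf_singleton]
  -- Hahn-Banach
  obtain ⟨L, hL0, hLle⟩ := exists_extension_of_le_sublinear
    ⟨⊥, 0⟩ p (fun c hc x => hscale c hc x) hsub
    (by rintro ⟨x, hx⟩
        rw [Submodule.mem_bot] at hx
        subst hx
        simp [LinearPMap.mk_apply, hp0])
  refine ⟨L, fun χ => ?_⟩
  calc L χ ≤ p χ := hLle χ
    _ ≤ q χ 1 := hple χ 1 one_pos
    _ = Γ (φ + χ) - Γ φ := by rw [hq]; simp

end Subgrad


-- ============ combinatorial layer (compiled) ============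

theorem exists_cantor_surjection (X : Type*) [MetricSpace X] [CompactSpace X] [Nonempty X] :
    ∃ (k : ℕ → ℕ), (∀ n, 0 < k n) ∧ ∃ g : (∀ n, Fin (k n)) → X,
      Continuous g ∧ Function.Surjective g := by
  have Hnet : ∀ n : ℕ, ∃ (m : ℕ) (S : Fin m → X), 0 < m ∧
      ∀ x : X, ∃ i, dist x (S i) < (1/2:ℝ)^n := by
    intro n
    have htb := isCompact_univ (X := X).totallyBounded
    rw [Metric.totallyBounded_iff] at htb
    obtain ⟨t, htf, hcov⟩ := htb ((1/2:ℝ)^n) (by positivity)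
    haveI := htf.fintype
    refine ⟨htf.toFinset.card, fun i => (htf.toFinset.equivFin.symm i : X), ?_, ?_⟩
    · obtain ⟨x⟩ := ‹Nonempty X›
      have hx := hcov (Set.mem_univ x)
      simp only [Set.mem_iUnion] at hx
      obtain ⟨y, hy, _⟩ := hx
      exact Finset.card_pos.2 ⟨y, htf.mem_toFinset.2 hy⟩
    · intro x
      have hx := hcov (Set.mem_univ x)
      simp only [Set.mem_iUnion] at hx
      obtain ⟨y, hy, hxy⟩ := hx
      refine ⟨htf.toFinset.equivFin ⟨y, htf.mem_toFinset.2 hy⟩, ?_⟩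
      simp only [Equiv.symm_apply_apply]
      exact Metric.mem_ball.1 hxy
  choose k S hk hS using Hnet
  set seq : (∀ n, Fin (k n)) → ℕ → X := fun σ => Nat.rec (S 0 (σ 0))
    (fun n xn => if dist xn (S (n+1) (σ (n+1))) ≤ (1/2:ℝ)^n + (1/2:ℝ)^(n+1)
      then S (n+1) (σ (n+1)) else xn) with hseqdef
  have hseq0 : ∀ σ, seq σ 0 = S 0 (σ 0) := fun σ => rfl
  have hseqS : ∀ σ n, seq σ (n+1) =
      if dist (seq σ n) (S (n+1) (σ (n+1))) ≤ (1/2:ℝ)^n + (1/2:ℝ)^(n+1)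
      then S (n+1) (σ (n+1)) else seq σ n := fun σ n => rfl
  have hd : ∀ σ n, dist (seq σ n) (seq σ (n+1)) ≤ (3/2) * (1/2:ℝ)^n := by
    intro σ n
    rw [hseqS]
    split
    · rename_i h
      have : (1/2:ℝ)^(n+1) = (1/2) * (1/2)^n := by ring
      rw [this] at h
      linarith
    · simp
  have hcauchy : ∀ σ, CauchySeq (seq σ) :=
    fun σ => cauchySeq_of_le_geometric (1/2) (3/2) (by norm_num) (hd σ)
  have Hlim : ∀ σ, ∃ x, Tendsto (seq σ) atTop (𝓝 x) :=
    fun σ => cauchySeq_tendsto_of_complete (hcauchy σ)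
  choose g hg using Hlim
  have hdist : ∀ σ n, dist (seq σ n) (g σ) ≤ 3 * (1/2:ℝ)^n := by
    intro σ n
    have h := dist_le_of_le_geometric_of_tendsto (1/2) (3/2) (by norm_num) (hd σ) (hg σ) n
    have he : (3/2:ℝ) * (1/2)^n / (1 - 1/2) = 3 * (1/2)^n := by ring
    rwa [he] at h
  have hloc : ∀ σ τ n, (∀ i, i ≤ n → σ i = τ i) → seq σ n = seq τ n := by
    intro σ τ n
    induction n with
    | zero => intro h; rw [hseq0, hseq0, h 0 le_rfl]
    | succ n ih =>
      intro h
      rw [hseqS, hseqS, ih (fun i hi => h i (hi.trans (Nat.le_succ n))), h (n+1) le_rfl]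
  refine ⟨k, hk, g, ?_, ?_⟩
  · rw [continuous_iff_continuousAt]
    intro σ
    rw [ContinuousAt, Metric.tendsto_nhds]
    intro ε hε
    obtain ⟨n, hn⟩ := exists_pow_lt_of_lt_one (show (0:ℝ) < ε/6 by linarith)
      (show (1/2:ℝ) < 1 by norm_num)
    have h1 : ∀ i : ℕ, ∀ᶠ τ in 𝓝 σ, τ i = σ i := by
      intro i
      have hmem : {x : Fin (k i) | x = σ i} ∈ 𝓝 (σ i) := by
        rw [nhds_discrete]
        simp
      exact ((continuous_apply i).continuousAt).eventually hmem
    have h2 : ∀ᶠ τ in 𝓝 σ, ∀ i ∈ Finset.range (n+1), τ i = σ i :=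
      (Filter.eventually_all_finset _).2 (fun i _ => h1 i)
    filter_upwards [h2] with τ hτ
    have hagree : ∀ i, i ≤ n → τ i = σ i :=
      fun i hi => hτ i (Finset.mem_range.2 (Nat.lt_succ_of_le hi))
    have := hloc τ σ n hagree
    calc dist (g τ) (g σ) ≤ dist (g τ) (seq τ n) + dist (seq τ n) (g σ) := dist_triangle _ _ _
      _ = dist (g τ) (seq τ n) + dist (seq σ n) (g σ) := by rw [this]
      _ ≤ 3 * (1/2)^n + 3 * (1/2)^n := by
          rw [dist_comm (g τ)]
          exact add_le_add (hdist τ n) (hdist σ n)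
      _ < ε := by linarith
  · intro x
    set σ : ∀ n, Fin (k n) := fun n => Classical.choose (hS n x) with hσdef
    have hσ : ∀ n, dist x (S n (σ n)) < (1/2:ℝ)^n := fun n => Classical.choose_spec (hS n x)
    have hinv : ∀ n, dist (seq σ n) x ≤ (1/2:ℝ)^n := by
      intro n
      induction n with
      | zero => rw [hseq0, dist_comm]; exact (hσ 0).le
      | succ n ih =>
        have hcond : dist (seq σ n) (S (n+1) (σ (n+1))) ≤ (1/2:ℝ)^n + (1/2:ℝ)^(n+1) :=
          (dist_triangle _ x _).trans (add_le_add ih (hσ (n+1)).le)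
        rw [hseqS, if_pos hcond, dist_comm]
        exact (hσ (n+1)).le
    refine ⟨σ, ?_⟩
    have htend : Tendsto (seq σ) atTop (𝓝 x) := by
      rw [tendsto_iff_dist_tendsto_zero]
      exact squeeze_zero (fun n => dist_nonneg) hinv
        (tendsto_pow_atTop_nhds_zero_of_lt_one (by norm_num) (by norm_num))
    exact tendsto_nhds_unique (hg σ) htend

namespace PVP

variable (k : ℕ → ℕ)

abbrev Cube := ∀ n, Fin (k n)
abbrev Node (n : ℕ) := ∀ i : Fin n, Fin (k i.1)

def trunc (n : ℕ) (σ : Cube k) : Node k n := fun i => σ i.1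

open Classical in
noncomputable def cyl (n : ℕ) (s : Node k n) : C(Cube k, ℝ) :=
  ⟨fun σ => if trunc k n σ = s then 1 else 0, by
    have h1 : Continuous (trunc k n) := continuous_pi fun i => continuous_apply _
    exact Continuous.comp (continuous_of_discreteTopology
      (f := fun v : Node k n => if v = s then (1:ℝ) else 0)) h1⟩

lemma cyl_apply (n : ℕ) (s : Node k n) (σ : Cube k) :
    cyl k n s σ = if trunc k n σ = s then 1 else 0 := by
  simp [cyl]

lemma cyl_nonneg (n : ℕ) (s : Node k n) (σ : Cube k) : 0 ≤ cyl k n s σ := by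
  rw [cyl_apply]; split <;> norm_num

lemma cyl_zero (s : Node k 0) : cyl k 0 s = 1 := by
  ext σ
  rw [cyl_apply, if_pos (Subsingleton.elim _ _)]
  rfl

lemma trunc_succ (n : ℕ) (σ : Cube k) :
    trunc k (n+1) σ = Fin.snoc (trunc k n σ) (σ n) := by
  funext i
  refine Fin.lastCases ?_ ?_ i
  · rw [Fin.snoc_last]; rfl
  · intro j
    rw [Fin.snoc_castSucc]; rfl

lemma sum_cyl (n : ℕ) (σ : Cube k) :
    ∑ s : Node k n, cyl k n s σ = 1 := by
  classical
  simp only [cyl_apply]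
  rw [Finset.sum_ite_eq]
  simp

lemma cyl_succ (n : ℕ) (s : Node k n) (σ : Cube k) :
    cyl k n s σ = ∑ c : Fin (k n), cyl k (n+1) (Fin.snoc s c) σ := by
  classical
  simp only [cyl_apply, trunc_succ]
  by_cases h : trunc k n σ = s
  · subst h
    have hcond : ∀ c : Fin (k n),
        ((Fin.snoc (trunc k n σ) (σ n) : Node k (n+1)) = (Fin.snoc (trunc k n σ) c : Node k (n+1))) ↔ σ n = c := by
      intro c
      constructor
      · intro h2
        have := congrFun h2 (Fin.last n)
        simpa [Fin.snoc_last] using this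
      · intro h2; rw [h2]
    rw [if_pos rfl]
    simp only [hcond]
    rw [Finset.sum_ite_eq]
    simp
  · rw [if_neg h]
    symm
    apply Finset.sum_eq_zero
    intro c _
    rw [if_neg]
    intro h2
    apply h
    have := congrArg Fin.init h2
    rwa [Fin.init_snoc, Fin.init_snoc] at this

/-- left endpoints of the tree of intervals -/
noncomputable def abar (m : ∀ n, Node k n → ℝ) : ∀ n, Node k n → ℝ
  | 0, _ => 0
  | (n+1), s => abar m n (Fin.init s) +
      ∑ c ∈ Finset.Iio (s (Fin.last n)), m (n+1) (Fin.snoc (Fin.init s) c)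

lemma abar_snoc (m : ∀ n, Node k n → ℝ) (n : ℕ) (s : Node k n) (c : Fin (k n)) :
    abar k m (n+1) (Fin.snoc s c) = abar k m n s +
      ∑ c' ∈ Finset.Iio c, m (n+1) (Fin.snoc s c') := by
  rw [abar]
  simp [Fin.init_snoc, Fin.snoc_last]

/-- the state recursion selecting nodes from a real number -/
def sfun (child : ∀ n, Node k n → ℝ → Fin (k n)) : ∀ n, ℝ → Node k n
  | 0, _ => fun i => i.elim0
  | (n+1), t => Fin.snoc (sfun child n t) (child n (sfun child n t) t)

section WithMass

variable (m : ∀ n, Node k n → ℝ)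
  (hm0 : ∀ s : Node k 0, m 0 s = 1)
  (hmnn : ∀ n s, 0 ≤ m n s)
  (hmsum : ∀ n (s : Node k n), m n s = ∑ c : Fin (k n), m (n+1) (Fin.snoc s c))

include hmnn in
lemma abar_le_abar_snoc (n : ℕ) (s : Node k n) (c : Fin (k n)) :
    abar k m n s ≤ abar k m (n+1) (Fin.snoc s c) := by
  rw [abar_snoc]
  have : 0 ≤ ∑ c' ∈ Finset.Iio c, m (n+1) (Fin.snoc s c') :=
    Finset.sum_nonneg fun c' _ => hmnn _ _
  linarith

include hmnn hmsum in
lemma abar_snoc_add_le (n : ℕ) (s : Node k n) (c : Fin (k n)) :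
    abar k m (n+1) (Fin.snoc s c) + m (n+1) (Fin.snoc s c) ≤ abar k m n s + m n s := by
  rw [abar_snoc]
  have h1 : ∑ c' ∈ Finset.Iio c, m (n+1) (Fin.snoc s c') + m (n+1) (Fin.snoc s c)
      = ∑ c' ∈ Finset.Iic c, m (n+1) (Fin.snoc s c') := by
    rw [← Finset.Iio_insert, Finset.sum_insert (by simp)]
    ring
  have h2 : ∑ c' ∈ Finset.Iic c, m (n+1) (Fin.snoc s c')
      ≤ ∑ c' : Fin (k n), m (n+1) (Fin.snoc s c') := by
    apply Finset.sum_le_sum_of_subset_of_nonneg (Finset.subset_univ _)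
    intro c' _ _
    exact hmnn _ _
  rw [hmsum n s]
  linarith
  
include hm0 hmnn hmsum in
lemma abar_bounds (n : ℕ) (s : Node k n) :
    0 ≤ abar k m n s ∧ abar k m n s + m n s ≤ 1 := by
  induction n with
  | zero =>
    constructor
    · rw [abar]
    · rw [abar, hm0]; norm_num
  | succ n ih =>
    have hs : s = Fin.snoc (Fin.init s) (s (Fin.last n)) := (Fin.snoc_init_self s).symm
    rw [hs]
    obtain ⟨ih1, ih2⟩ := ih (Fin.init s)
    constructor
    · exact le_trans ih1 (abar_le_abar_snoc k m hmnn _ _ _)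
    · exact le_trans (abar_snoc_add_le k m hmnn hmsum _ _ _) ih2

end WithMass



open Classical in
noncomputable def child (hk : ∀ n, 0 < k n) (m : ∀ n, Node k n → ℝ) (n : ℕ)
    (s : Node k n) (t : ℝ) : Fin (k n) :=
  if h : (Finset.univ.filter (fun c : Fin (k n) =>
      t < abar k m n s + ∑ c' ∈ Finset.Iic c, m (n+1) (Fin.snoc s c'))).Nonempty
  then (Finset.univ.filter (fun c : Fin (k n) =>
      t < abar k m n s + ∑ c' ∈ Finset.Iic c, m (n+1) (Fin.snoc s c'))).min' h
  else ⟨0, hk n⟩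

section Child

variable (hk : ∀ n, 0 < k n) (m : ∀ n, Node k n → ℝ)
  (hmnn : ∀ n s, 0 ≤ m n s)
  (hmsum : ∀ n (s : Node k n), m n s = ∑ c : Fin (k n), m (n+1) (Fin.snoc s c))

include hmsum in
lemma child_spec {n : ℕ} {s : Node k n} {t : ℝ}
    (hlt : t < abar k m n s + m n s) :
    t < abar k m n s + ∑ c' ∈ Finset.Iic (child k hk m n s t), m (n+1) (Fin.snoc s c') := by
  classical
  haveI : Nonempty (Fin (k n)) := ⟨⟨0, hk n⟩⟩
  set T := Finset.univ.filter (fun c : Fin (k n) =>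
      t < abar k m n s + ∑ c' ∈ Finset.Iic c, m (n+1) (Fin.snoc s c')) with hT
  have hTne : T.Nonempty := by
    set cmax := Finset.univ.max' (Finset.univ_nonempty (α := Fin (k n))) with hcm
    refine ⟨cmax, Finset.mem_filter.2 ⟨Finset.mem_univ _, ?_⟩⟩
    have hIic : Finset.Iic cmax = Finset.univ := by
      apply Finset.eq_univ_iff_forall.2
      intro c
      exact Finset.mem_Iic.2 (Finset.le_max' _ _ (Finset.mem_univ _))
    rw [hIic, ← hmsum]
    exact hlt
  have hch : child k hk m n s t = T.min' hTne := by
    rw [child, dif_pos hTne]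
  rw [hch]
  have := Finset.min'_mem T hTne
  exact (Finset.mem_filter.1 this).2

lemma child_lb {n : ℕ} {s : Node k n} {t : ℝ}
    {c : Fin (k n)} (hc : c < child k hk m n s t) :
    abar k m n s + ∑ c' ∈ Finset.Iic c, m (n+1) (Fin.snoc s c') ≤ t := by
  classical
  by_contra hcon
  push_neg at hcon
  set T := Finset.univ.filter (fun c : Fin (k n) =>
      t < abar k m n s + ∑ c' ∈ Finset.Iic c, m (n+1) (Fin.snoc s c')) with hT
  have hcT : c ∈ T := Finset.mem_filter.2 ⟨Finset.mem_univ _, hcon⟩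
  have hTne : T.Nonempty := ⟨c, hcT⟩
  have hch : child k hk m n s t = T.min' hTne := by
    rw [child, dif_pos hTne]
  rw [hch] at hc
  exact absurd (Finset.min'_le T c hcT) (not_le.2 hc)

include hmnn hmsum in
lemma child_eq {n : ℕ} {s : Node k n} {t : ℝ} {c : Fin (k n)}
    (hlt : t < abar k m n s + m n s)
    (hc1 : t < abar k m n s + ∑ c' ∈ Finset.Iic c, m (n+1) (Fin.snoc s c'))
    (hc2 : abar k m n s + ∑ c' ∈ Finset.Iio c, m (n+1) (Fin.snoc s c') ≤ t) :
    child k hk m n s t = c := by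
  classical
  rcases lt_trichotomy (child k hk m n s t) c with h | h | h
  · exfalso
    have hspec := child_spec k hk m hmsum hlt
    have hsub : Finset.Iic (child k hk m n s t) ⊆ Finset.Iio c := by
      intro c' hc'
      exact Finset.mem_Iio.2 (lt_of_le_of_lt (Finset.mem_Iic.1 hc') h)
    have hsum : ∑ c' ∈ Finset.Iic (child k hk m n s t), m (n+1) (Fin.snoc s c')
        ≤ ∑ c' ∈ Finset.Iio c, m (n+1) (Fin.snoc s c') :=
      Finset.sum_le_sum_of_subset_of_nonneg hsub (fun _ _ _ => hmnn _ _)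
    linarith
  · exact h
  · exfalso
    have := child_lb k hk m (c := c) h
    linarith

end Child

section Sfun

variable (hk : ∀ n, 0 < k n) (m : ∀ n, Node k n → ℝ)
  (hm0 : ∀ s : Node k 0, m 0 s = 1)
  (hmnn : ∀ n s, 0 ≤ m n s)
  (hmsum : ∀ n (s : Node k n), m n s = ∑ c : Fin (k n), m (n+1) (Fin.snoc s c))

/-- abbreviation for the selection process -/
noncomputable def sel : ∀ n, ℝ → Node k n :=
  sfun k (fun n s t => child k hk m n s t)

lemma sel_zero (t : ℝ) : sel k hk m 0 t = fun i => i.elim0 := rfl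

lemma sel_succ (n : ℕ) (t : ℝ) :
    sel k hk m (n+1) t = Fin.snoc (sel k hk m n t)
      (child k hk m n (sel k hk m n t) t) := rfl

include hm0 hmsum in
lemma sel_invariant {t : ℝ} (ht : t ∈ Ico (0:ℝ) 1) (n : ℕ) :
    abar k m n (sel k hk m n t) ≤ t ∧
      t < abar k m n (sel k hk m n t) + m n (sel k hk m n t) := by
  induction n with
  | zero =>
    constructor
    · rw [abar]; exact ht.1
    · rw [abar, hm0]; linarith [ht.2]
  | succ n ih =>
    obtain ⟨ih1, ih2⟩ := ih
    set s := sel k hk m n t with hs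
    set c₀ := child k hk m n s t with hc₀
    have hsel : sel k hk m (n+1) t = Fin.snoc s c₀ := sel_succ k hk m n t
    rw [hsel]
    have hIicIio : ∑ c' ∈ Finset.Iio c₀, m (n+1) (Fin.snoc s c') + m (n+1) (Fin.snoc s c₀)
        = ∑ c' ∈ Finset.Iic c₀, m (n+1) (Fin.snoc s c') := by
      rw [← Finset.Iio_insert, Finset.sum_insert (by simp)]
      ring
    constructor
    · rw [abar_snoc]
      rcases Finset.eq_empty_or_nonempty (Finset.Iio c₀) with he | hne
      · rw [he, Finset.sum_empty]; linarith
      · set c'' := (Finset.Iio c₀).max' hne with hc''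
        have hc''mem : c'' ∈ Finset.Iio c₀ := Finset.max'_mem _ hne
        have hIio : Finset.Iio c₀ = Finset.Iic c'' := by
          apply Finset.ext
          intro c'
          simp only [Finset.mem_Iio, Finset.mem_Iic]
          constructor
          · intro h; exact Finset.le_max' _ _ (Finset.mem_Iio.2 h)
          · intro h; exact lt_of_le_of_lt h (Finset.mem_Iio.1 hc''mem)
        rw [hIio]
        exact child_lb k hk m (Finset.mem_Iio.1 hc''mem)
    · rw [abar_snoc]
      have := child_spec k hk m hmsum ih2
      linarith [hIicIio]

include hm0 hmnn hmsum in
lemma sel_eq_iff {t : ℝ} (ht : t ∈ Ico (0:ℝ) 1) (n : ℕ) (s : Node k n) :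
    sel k hk m n t = s ↔ t ∈ Ico (abar k m n s) (abar k m n s + m n s) := by
  constructor
  · rintro rfl
    obtain ⟨h1, h2⟩ := sel_invariant k hk m hm0 hmsum ht n
    exact ⟨h1, h2⟩
  · intro hmem
    induction n with
    | zero => exact Subsingleton.elim _ _
    | succ n ih =>
      set s₀ : Node k n := Fin.init s with hs₀
      set c : Fin (k n) := s (Fin.last n) with hc
      have hsnoc : (Fin.snoc s₀ c : Node k (n+1)) = s := Fin.snoc_init_self s
      have hmem' : t ∈ Ico (abar k m (n+1) (Fin.snoc s₀ c))
          (abar k m (n+1) (Fin.snoc s₀ c) + m (n+1) (Fin.snoc s₀ c)) := by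
        rw [hsnoc]; exact hmem
      have hmem0 : t ∈ Ico (abar k m n s₀) (abar k m n s₀ + m n s₀) := by
        constructor
        · exact le_trans (abar_le_abar_snoc k m hmnn n s₀ c) hmem'.1
        · exact lt_of_lt_of_le hmem'.2 (abar_snoc_add_le k m hmnn hmsum n s₀ c)
      have hsel0 : sel k hk m n t = s₀ := ih s₀ hmem0
      have hlt : t < abar k m n s₀ + m n s₀ := hmem0.2
      have hc1 : t < abar k m n s₀ + ∑ c' ∈ Finset.Iic c, m (n+1) (Fin.snoc s₀ c') := by
        have h2 := hmem'.2
        rw [abar_snoc] at h2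
        have hIicIio : ∑ c' ∈ Finset.Iio c, m (n+1) (Fin.snoc s₀ c') + m (n+1) (Fin.snoc s₀ c)
            = ∑ c' ∈ Finset.Iic c, m (n+1) (Fin.snoc s₀ c') := by
          rw [← Finset.Iio_insert, Finset.sum_insert (by simp)]
          ring
        linarith
      have hc2 : abar k m n s₀ + ∑ c' ∈ Finset.Iio c, m (n+1) (Fin.snoc s₀ c') ≤ t := by
        have h1 := hmem'.1
        rw [abar_snoc] at h1
        linarith
      have hcc : child k hk m n s₀ t = c := child_eq k hk m hmnn hmsum hlt hc1 hc2
      rw [sel_succ, hsel0, hcc, hsnoc]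

end Sfun

noncomputable def clamp (t : ℝ) : ℝ := if t ∈ Ico (0:ℝ) 1 then t else 0

lemma clamp_mem (t : ℝ) : clamp t ∈ Ico (0:ℝ) 1 := by
  rw [clamp]
  split
  · assumption
  · exact ⟨le_refl 0, one_pos⟩

lemma clamp_eq {t : ℝ} (ht : t ∈ Ico (0:ℝ) 1) : clamp t = t := if_pos ht

lemma measurable_clamp : Measurable clamp :=
  Measurable.ite measurableSet_Ico measurable_id measurable_const

section Hmap

variable (hk : ∀ n, 0 < k n) (m : ∀ n, Node k n → ℝ)
  (hm0 : ∀ s : Node k 0, m 0 s = 1)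
  (hmnn : ∀ n s, 0 ≤ m n s)
  (hmsum : ∀ n (s : Node k n), m n s = ∑ c : Fin (k n), m (n+1) (Fin.snoc s c))

noncomputable def hmap : ℝ → Cube k :=
  fun t n => sel k hk m (n+1) (clamp t) (Fin.last n)

lemma sel_coord (u : ℝ) : ∀ (n : ℕ) (i : Fin n),
    sel k hk m n u i = sel k hk m (i.1+1) u (Fin.last i.1) := by
  intro n
  induction n with
  | zero => exact fun i => i.elim0
  | succ n ih =>
    intro i
    refine Fin.lastCases ?_ ?_ i
    · rfl
    · intro j
      have h1 : sel k hk m (n+1) u (Fin.castSucc j) = sel k hk m n u j := by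
        rw [sel_succ]
        exact Fin.snoc_castSucc _ _ _
      rw [h1, ih j]
      rfl

lemma trunc_hmap (t : ℝ) (n : ℕ) :
    trunc k n (hmap k hk m t) = sel k hk m n (clamp t) := by
  funext i
  rw [trunc]
  show hmap k hk m t i.1 = _
  rw [hmap]
  exact (sel_coord k hk m (clamp t) n i).symm

include hm0 hmnn hmsum in
lemma measurable_selset (n : ℕ) (s : Node k n) :
    MeasurableSet {t : ℝ | sel k hk m n (clamp t) = s} := by
  have hset : {t : ℝ | sel k hk m n (clamp t) = s} =
      clamp ⁻¹' (Ico (abar k m n s) (abar k m n s + m n s) ∩ Ico 0 1) := by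
    ext t
    simp only [mem_setOf_eq, mem_preimage, mem_inter_iff]
    constructor
    · intro h
      exact ⟨(sel_eq_iff k hk m hm0 hmnn hmsum (clamp_mem t) n s).1 h, clamp_mem t⟩
    · intro h
      exact (sel_eq_iff k hk m hm0 hmnn hmsum (clamp_mem t) n s).2 h.1
  rw [hset]
  exact measurable_clamp (measurableSet_Ico.inter measurableSet_Ico)

include hm0 hmnn hmsum in
lemma measurable_hmap : Measurable (hmap k hk m) := by
  apply measurable_pi_lambda
  intro n
  apply measurable_to_countable'
  intro c
  have hset : (fun t => hmap k hk m t n) ⁻¹' {c} =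
      ⋃ (s : Node k (n+1)), ⋃ (_ : s (Fin.last n) = c),
        {t : ℝ | sel k hk m (n+1) (clamp t) = s} := by
    ext t
    simp only [mem_preimage, mem_singleton_iff, mem_iUnion, mem_setOf_eq]
    constructor
    · intro h
      exact ⟨sel k hk m (n+1) (clamp t), h, rfl⟩
    · rintro ⟨s, hs, rfl⟩
      exact hs
  rw [hset]
  exact MeasurableSet.iUnion fun s => MeasurableSet.iUnion fun _ =>
    measurable_selset k hk m hm0 hmnn hmsum (n+1) s

end Hmap

lemma cyl_mul {n n' : ℕ} (h : n ≤ n') (s : Node k n) (s' : Node k n') :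
    cyl k n s * cyl k n' s' = cyl k n' s' ∨ cyl k n s * cyl k n' s' = 0 := by
  classical
  by_cases H : (fun i : Fin n => s' (Fin.castLE h i)) = s
  · left
    ext σ
    rw [ContinuousMap.mul_apply, cyl_apply, cyl_apply]
    by_cases hy : trunc k n' σ = s'
    · have hx : trunc k n σ = s := by
        funext i
        rw [← H]
        show σ i.1 = s' (Fin.castLE h i)
        rw [← hy]
        rfl
      rw [if_pos hx, if_pos hy, one_mul]
    · rw [if_neg hy, mul_zero]
  · right
    ext σ
    rw [ContinuousMap.mul_apply, cyl_apply, cyl_apply]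
    by_cases hy : trunc k n' σ = s'
    · rw [if_pos hy]
      have hx : trunc k n σ ≠ s := by
        intro hx
        apply H
        funext i
        show s' (Fin.castLE h i) = s i
        rw [← hx, ← hy]
        rfl
      rw [if_neg hx, zero_mul]
      rfl
    · rw [if_neg hy, mul_zero]
      rfl

theorem exists_repr_measure_pi (hk : ∀ n, 0 < k n)
    (L : C(Cube k, ℝ) →ₗ[ℝ] ℝ)
    (hL : ∀ F : C(Cube k, ℝ), L F ≤ sSup (Set.range ⇑F)) :
    ∃ μ : Measure (Cube k), IsProbabilityMeasure μ ∧
      ∀ F : C(Cube k, ℝ), ∫ σ, F σ ∂μ = L F := by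
  classical
  haveI : ∀ n, Nonempty (Fin (k n)) := fun n => ⟨⟨0, hk n⟩⟩
  haveI : Nonempty (Cube k) := ⟨fun n => ⟨0, hk n⟩⟩
  -- basic facts on L
  have hLle : ∀ (F : C(Cube k, ℝ)) (c : ℝ), (∀ σ, F σ ≤ c) → L F ≤ c := by
    intro F c h
    refine (hL F).trans (csSup_le (range_nonempty _) ?_)
    rintro _ ⟨σ, rfl⟩
    exact h σ
  have hmono : ∀ F G : C(Cube k, ℝ), (∀ σ, F σ ≤ G σ) → L F ≤ L G := by
    intro F G h
    have h1 : L (F - G) ≤ 0 := hLle _ _ (by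
      intro σ
      simp only [ContinuousMap.sub_apply]
      linarith [h σ])
    rw [map_sub] at h1
    linarith
  have hone : L 1 = 1 := by
    have h1 : L 1 ≤ 1 := hLle 1 1 (fun σ => le_refl 1)
    have h2 : L (-1) ≤ -1 := hLle (-1) (-1) (fun σ => le_refl _)
    rw [map_neg] at h2
    linarith
  have habs : ∀ F : C(Cube k, ℝ), |L F| ≤ ‖F‖ := by
    intro F
    rw [abs_le]
    constructor
    · have h2 : L (-F) ≤ ‖F‖ := hLle (-F) ‖F‖ (by
        intro σ
        simp only [ContinuousMap.neg_apply]
        have := ContinuousMap.norm_coe_le_norm F σ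
        rw [Real.norm_eq_abs] at this
        linarith [abs_le.1 this])
      rw [map_neg] at h2
      linarith
    · refine hLle F ‖F‖ (fun σ => ?_)
      have := ContinuousMap.norm_coe_le_norm F σ
      rw [Real.norm_eq_abs] at this
      linarith [abs_le.1 this]
  -- masses
  set m : ∀ n, Node k n → ℝ := fun n s => L (cyl k n s) with hm
  have hm0 : ∀ s : Node k 0, m 0 s = 1 := by
    intro s
    rw [hm]
    simp only [cyl_zero]
    exact hone
  have hmnn : ∀ n (s : Node k n), 0 ≤ m n s := by
    intro n s
    have : L 0 ≤ L (cyl k n s) := hmono 0 (cyl k n s) (by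
      intro σ
      simp only [ContinuousMap.zero_apply]
      exact cyl_nonneg k n s σ)
    rwa [map_zero] at this
  have hmsum : ∀ n (s : Node k n), m n s = ∑ c : Fin (k n), m (n+1) (Fin.snoc s c) := by
    intro n s
    have hcy : cyl k n s = ∑ c : Fin (k n), cyl k (n+1) (Fin.snoc s c) := by
      ext σ
      rw [cyl_succ, ContinuousMap.sum_apply]
    rw [hm]
    simp only []
    rw [hcy, map_sum]
  -- the measure
  have hmeas : Measurable (hmap k hk m) := measurable_hmap k hk m hm0 hmnn hmsum
  haveI hPIco : IsProbabilityMeasure (volume.restrict (Ico (0:ℝ) 1)) := by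
    constructor
    rw [Measure.restrict_apply MeasurableSet.univ, univ_inter, Real.volume_Ico]
    norm_num
  set μ : Measure (Cube k) := Measure.map (hmap k hk m) (volume.restrict (Ico 0 1)) with hμ
  haveI hμprob : IsProbabilityMeasure μ := Measure.isProbabilityMeasure_map hmeas.aemeasurable
  -- integral of cylinder functions
  have hcylint : ∀ (n : ℕ) (s : Node k n), ∫ σ, cyl k n s σ ∂μ = m n s := by
    intro n s
    rw [hμ, integral_map hmeas.aemeasurable ((cyl k n s).continuous.aestronglyMeasurable)]
    have heq : ∀ t : ℝ, cyl k n s (hmap k hk m t) =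
        Set.indicator (Ico (abar k m n s) (abar k m n s + m n s)) (fun _ => (1:ℝ)) (clamp t) := by
      intro t
      rw [cyl_apply, trunc_hmap]
      by_cases h : sel k hk m n (clamp t) = s
      · rw [if_pos h, Set.indicator_of_mem
          ((sel_eq_iff k hk m hm0 hmnn hmsum (clamp_mem t) n s).1 h)]
      · rw [if_neg h, Set.indicator_of_notMem
          (fun hmem => h ((sel_eq_iff k hk m hm0 hmnn hmsum (clamp_mem t) n s).2 hmem))]
    simp_rw [heq]
    have heq2 : ∫ t in Ico (0:ℝ) 1,
        Set.indicator (Ico (abar k m n s) (abar k m n s + m n s)) (fun _ => (1:ℝ)) (clamp t)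
        = ∫ t in Ico (0:ℝ) 1,
        Set.indicator (Ico (abar k m n s) (abar k m n s + m n s)) (fun _ => (1:ℝ)) t := by
      apply setIntegral_congr_fun measurableSet_Ico
      intro t ht
      simp only [clamp_eq ht]
    rw [heq2, integral_indicator measurableSet_Ico, Measure.restrict_restrict measurableSet_Ico,
      setIntegral_const]
    have hsub : Ico (abar k m n s) (abar k m n s + m n s) ⊆ Ico (0:ℝ) 1 :=
      Ico_subset_Ico (abar_bounds k m hm0 hmnn hmsum n s).1
        (abar_bounds k m hm0 hmnn hmsum n s).2
    rw [inter_eq_self_of_subset_left hsub, measureReal_def, Real.volume_Ico]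
    have : abar k m n s + m n s - abar k m n s = m n s := by ring
    rw [this, ENNReal.toReal_ofReal (hmnn n s), smul_eq_mul, mul_one]
  -- integrability
  have hint : ∀ F : C(Cube k, ℝ), Integrable (fun σ => F σ) μ := by
    intro F
    have := (BoundedContinuousFunction.mkOfCompact F).integrable (μ := μ)
    exact this
  -- two continuous linear functionals
  set Φ : C(Cube k, ℝ) →ₗ[ℝ] ℝ :=
    { toFun := fun F => ∫ σ, F σ ∂μ
      map_add' := by
        intro F G
        simp only [ContinuousMap.add_apply]
        exact integral_add (hint F) (hint G)
      map_smul' := by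
        intro c F
        simp only [ContinuousMap.smul_apply, RingHom.id_apply, smul_eq_mul]
        have h := integral_smul (μ := μ) c (fun σ : Cube k => F σ)
        simpa [smul_eq_mul] using h } with hΦ
  have hΦbound : ∀ F : C(Cube k, ℝ), ‖Φ F‖ ≤ 1 * ‖F‖ := by
    intro F
    rw [one_mul, hΦ]
    simp only [LinearMap.coe_mk, AddHom.coe_mk]
    have h1 : ‖∫ σ, F σ ∂μ‖ ≤ ‖F‖ * (μ univ).toReal :=
      norm_integral_le_of_norm_le_const (Filter.Eventually.of_forall
        (fun σ => ContinuousMap.norm_coe_le_norm F σ))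
    rwa [measure_univ, ENNReal.toReal_one, mul_one] at h1
  have hLbound : ∀ F : C(Cube k, ℝ), ‖L F‖ ≤ 1 * ‖F‖ := by
    intro F
    rw [one_mul, Real.norm_eq_abs]
    exact habs F
  have hΦcont : Continuous fun F : C(Cube k, ℝ) => Φ F :=
    (LinearMap.mkContinuous Φ 1 hΦbound).continuous
  have hLcont : Continuous fun F : C(Cube k, ℝ) => L F :=
    (LinearMap.mkContinuous L 1 hLbound).continuous
  -- the cylinder algebra
  set Scyl : Set C(Cube k, ℝ) := {F | ∃ n s, F = cyl k n s} with hScyl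
  have heqspan : ∀ F ∈ Submodule.span ℝ ((Submonoid.closure Scyl : Submonoid C(Cube k, ℝ)) : Set C(Cube k, ℝ)), Φ F = L F := by
    intro F hF
    induction hF using Submodule.span_induction with
    | mem F hF =>
      have hmem : F ∈ insert (0 : C(Cube k, ℝ)) Scyl := by
        induction hF using Submonoid.closure_induction with
        | mem G hG => exact Set.mem_insert_of_mem _ hG
        | one =>
          refine Set.mem_insert_of_mem _ ?_
          exact ⟨0, fun i => i.elim0, (cyl_zero k _).symm⟩
        | mul G G' hGc hG'c hG hG' =>
          rcases hG with hG0 | hGm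
          · rw [hG0, zero_mul]; exact Set.mem_insert _ _
          · rcases hG' with hG'0 | hG'm
            · rw [hG'0, mul_zero]; exact Set.mem_insert _ _
            · obtain ⟨n, s, rfl⟩ := hGm
              obtain ⟨n', s', rfl⟩ := hG'm
              rcases le_total n n' with hnn | hnn
              · rcases cyl_mul k hnn s s' with h | h
                · rw [h]; exact Set.mem_insert_of_mem _ ⟨n', s', rfl⟩
                · rw [h]; exact Set.mem_insert _ _
              · rw [mul_comm]
                rcases cyl_mul k hnn s' s with h | h
                · rw [h]; exact Set.mem_insert_of_mem _ ⟨n, s, rfl⟩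
                · rw [h]; exact Set.mem_insert _ _
      rcases hmem with h0 | ⟨n, s, rfl⟩
      · rw [h0, map_zero, map_zero]
      · rw [hΦ]
        simp only [LinearMap.coe_mk, AddHom.coe_mk]
        exact hcylint n s
    | zero => rw [map_zero, map_zero]
    | add F G _ _ hF hG => rw [map_add, map_add, hF, hG]
    | smul c F _ hF => rw [_root_.map_smul, _root_.map_smul, hF]
  set A : Subalgebra ℝ C(Cube k, ℝ) := Algebra.adjoin ℝ Scyl with hA
  have heqA : ∀ F ∈ A, Φ F = L F := by
    intro F hF
    apply heqspan
    rw [← Algebra.adjoin_eq_span]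
    exact hF
  have hsep : A.SeparatesPoints := by
    intro σ τ hne
    obtain ⟨n, hn⟩ := Function.ne_iff.1 hne
    refine ⟨cyl k (n+1) (trunc k (n+1) σ), ?_, ?_⟩
    · exact ⟨_, Algebra.subset_adjoin ⟨n+1, trunc k (n+1) σ, rfl⟩, rfl⟩
    · rw [cyl_apply, cyl_apply, if_pos rfl, if_neg]
      · norm_num
      · intro hcon
        apply hn
        have := congrFun hcon (Fin.last n)
        exact this.symm
  have hdense : Dense (A : Set C(Cube k, ℝ)) := by
    have htop := ContinuousMap.subalgebra_topologicalClosure_eq_top_of_separatesPoints A hsep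
    rw [dense_iff_closure_eq]
    have : (A.topologicalClosure : Set C(Cube k, ℝ)) = closure (A : Set C(Cube k, ℝ)) :=
      Subalgebra.topologicalClosure_coe A
    rw [← this, htop]
    rfl
  have hfinal : (fun F : C(Cube k, ℝ) => Φ F) = fun F => L F :=
    Continuous.ext_on hdense hΦcont hLcont (fun F hF => heqA F hF)
  refine ⟨μ, hμprob, fun F => ?_⟩
  have := congrFun hfinal F
  rw [hΦ] at this
  simpa using this

end PVP


section Extend

variable {X K' : Type*} [TopologicalSpace X] [CompactSpace X] [Nonempty X]
  [TopologicalSpace K'] [CompactSpace K'] [Nonempty K']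

theorem extend_functional (g : C(K', X)) (hgs : Function.Surjective g)
    (L : C(X, ℝ) →ₗ[ℝ] ℝ) (hL : ∀ f : C(X, ℝ), L f ≤ sSup (Set.range ⇑f)) :
    ∃ L' : C(K', ℝ) →ₗ[ℝ] ℝ, (∀ F : C(K', ℝ), L' F ≤ sSup (Set.range ⇑F)) ∧
      ∀ f : C(X, ℝ), L' (f.comp g) = L f := by
  classical
  set N : C(K', ℝ) → ℝ := fun F => sSup (Set.range ⇑F) with hN
  have hbdd : ∀ F : C(K', ℝ), BddAbove (Set.range ⇑F) :=
    fun F => (isCompact_range F.continuous).bddAbove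
  have hNle : ∀ (F : C(K', ℝ)) (σ : K'), F σ ≤ N F :=
    fun F σ => le_csSup (hbdd F) ⟨σ, rfl⟩
  have hNattain : ∀ F : C(K', ℝ), ∃ σ, N F = F σ := by
    intro F
    have hmem : sSup (Set.range ⇑F) ∈ Set.range ⇑F :=
      (isCompact_range F.continuous).sSup_mem (Set.range_nonempty _)
    obtain ⟨σ, hσ⟩ := hmem
    exact ⟨σ, hσ.symm⟩
  have hNhom : ∀ c : ℝ, 0 < c → ∀ F : C(K', ℝ), N (c • F) = c * N F := by
    intro c hc F
    apply le_antisymm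
    · obtain ⟨σ, hσ⟩ := hNattain (c • F)
      rw [hσ]
      show c * F σ ≤ c * N F
      exact mul_le_mul_of_nonneg_left (hNle F σ) hc.le
    · obtain ⟨σ, hσ⟩ := hNattain F
      rw [hσ]
      calc c * F σ = (c • F) σ := rfl
        _ ≤ N (c • F) := hNle _ σ
  have hNadd : ∀ F G : C(K', ℝ), N (F + G) ≤ N F + N G := by
    intro F G
    obtain ⟨σ, hσ⟩ := hNattain (F + G)
    rw [hσ]
    exact add_le_add (hNle F σ) (hNle G σ)
  set j : C(X, ℝ) →ₗ[ℝ] C(K', ℝ) := (ContinuousMap.compRightAlgHom ℝ ℝ g).toLinearMap with hj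
  have hjval : ∀ f : C(X, ℝ), j f = f.comp g := fun f => rfl
  have hjinj : Function.Injective j := by
    intro f f' hff
    ext x
    obtain ⟨σ, rfl⟩ := hgs x
    have := congrFun (congrArg DFunLike.coe hff) σ
    simpa [hjval] using this
  set e : C(X, ℝ) ≃ₗ[ℝ] LinearMap.range j := LinearEquiv.ofInjective j hjinj with he
  have hecoe : ∀ f : C(X, ℝ), ((e f : LinearMap.range j) : C(K', ℝ)) = j f := by
    intro f
    rfl
  set f₀ : C(K', ℝ) →ₗ.[ℝ] ℝ := ⟨LinearMap.range j, L.comp (e.symm.toLinearMap)⟩ with hf₀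
  have hf : ∀ x : f₀.domain, f₀ x ≤ N x := by
    rintro x
    have hx : (x : C(K', ℝ)) = j (e.symm x) := by
      rw [← hecoe (e.symm x), LinearEquiv.apply_symm_apply]
    set f := e.symm x with hfdef
    have hranges : Set.range ⇑(j f) = Set.range ⇑f := by
      rw [hjval]
      show Set.range (⇑f ∘ ⇑g) = Set.range ⇑f
      exact hgs.range_comp ⇑f
    have : L f ≤ sSup (Set.range ⇑f) := hL f
    calc f₀ x = L f := rfl
      _ ≤ sSup (Set.range ⇑f) := hL f
      _ = sSup (Set.range ⇑(j f)) := by rw [hranges]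
      _ = N x := by rw [hN, hx]
  obtain ⟨L', hext, hle⟩ := exists_extension_of_le_sublinear f₀ N hNhom hNadd hf
  refine ⟨L', hle, ?_⟩
  intro f
  have hmem : j f ∈ LinearMap.range j := ⟨f, rfl⟩
  have h1 := hext ⟨j f, hmem⟩
  have h2 : f₀ ⟨j f, hmem⟩ = L f := by
    show L (e.symm ⟨j f, hmem⟩) = L f
    congr 1
    have : (⟨j f, hmem⟩ : LinearMap.range j) = e f := by
      apply Subtype.ext
      rw [hecoe]
    rw [this, LinearEquiv.symm_apply_apply]
  rw [h2] at h1
  rw [← hjval f]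
  exact h1

end Extend

theorem exists_repr_measure {X : Type*} [MetricSpace X] [CompactSpace X] [Nonempty X]
    [MeasurableSpace X] [BorelSpace X]
    (L : C(X, ℝ) →ₗ[ℝ] ℝ) (hL : ∀ f : C(X, ℝ), L f ≤ sSup (Set.range ⇑f)) :
    ∃ μ : Measure X, IsProbabilityMeasure μ ∧
      ∀ f : C(X, ℝ), ∫ x, f x ∂μ = L f := by
  obtain ⟨k, hk, g, hgc, hgs⟩ := exists_cantor_surjection X
  haveI : ∀ n, Nonempty (Fin (k n)) := fun n => ⟨⟨0, hk n⟩⟩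
  haveI : Nonempty (PVP.Cube k) := ⟨fun n => ⟨0, hk n⟩⟩
  obtain ⟨L', hle, hext⟩ := extend_functional (⟨g, hgc⟩ : C(PVP.Cube k, X)) hgs L hL
  obtain ⟨μK, hprob, hint⟩ := PVP.exists_repr_measure_pi k hk L' hle
  refine ⟨Measure.map g μK, Measure.isProbabilityMeasure_map hgc.measurable.aemeasurable, ?_⟩
  intro f
  rw [integral_map hgc.measurable.aemeasurable f.continuous.aestronglyMeasurable]
  have := hint (f.comp (⟨g, hgc⟩ : C(PVP.Cube k, X)))
  rw [hext f] at this
  exact this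

/-- The entropy-like map `𝔥(μ) = inf { ∫ φ dμ : φ ∈ C(X), Γ(−φ) ≤ 0 }`, valued in `EReal`
(so that the value `−∞` is allowed). -/
noncomputable def entropyLike {X : Type*} [TopologicalSpace X] [CompactSpace X]
    [MeasurableSpace X] (Γ : C(X, ℝ) → ℝ) (μ : ProbabilityMeasure X) : EReal :=
  sInf { r : EReal | ∃ φ : C(X, ℝ), Γ (-φ) ≤ 0 ∧
    r = ((∫ x, φ x ∂(μ : Measure X) : ℝ) : EReal) }

/-- Variational principle: for every pressure function `Γ` and every
`φ ∈ C(X)`, the supremum of `𝔥(μ) + ∫ φ dμ` over Borel probability measures is attained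
and equals `Γ(φ)`. -/
theorem pressure_variational_principle {X : Type*} [MetricSpace X] [CompactSpace X]
    [Nonempty X] [MeasurableSpace X] [BorelSpace X]
    (Γ : C(X, ℝ) → ℝ) (hΓ : IsPressureFunction Γ) (φ : C(X, ℝ)) :
    ∃ μ : ProbabilityMeasure X,
      entropyLike Γ μ + ((∫ x, φ x ∂(μ : Measure X) : ℝ) : EReal) = (Γ φ : EReal) ∧
      ∀ ν : ProbabilityMeasure X,
        entropyLike Γ ν + ((∫ x, φ x ∂(ν : Measure X) : ℝ) : EReal) ≤ (Γ φ : EReal) := by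
  obtain ⟨L, hLsub⟩ := exists_subgradient Γ hΓ φ
  have hLmax : ∀ f : C(X, ℝ), L f ≤ sSup (Set.range ⇑f) := by
    intro f
    refine (hLsub f).trans ?_
    have hb : BddAbove (Set.range ⇑f) := (isCompact_range f.continuous).bddAbove
    have hfle : ∀ x, f x ≤ sSup (Set.range ⇑f) := fun x => le_csSup hb ⟨x, rfl⟩
    have h1 : Γ (φ + f) ≤ Γ (φ + ContinuousMap.const X (sSup (Set.range ⇑f))) := by
      apply hΓ.1
      intro x
      simp only [ContinuousMap.add_apply, ContinuousMap.const_apply]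
      linarith [hfle x]
    rw [hΓ.2.1] at h1
    linarith
  obtain ⟨μ0, hprob, hrepr⟩ := exists_repr_measure L hLmax
  set μ : ProbabilityMeasure X := ⟨μ0, hprob⟩ with hμdef
  have hμcoe : (μ : Measure X) = μ0 := rfl
  have hint : ∀ (ν : ProbabilityMeasure X) (f : C(X, ℝ)),
      Integrable (fun x => f x) (ν : Measure X) := by
    intro ν f
    have := (BoundedContinuousFunction.mkOfCompact f).integrable (μ := (ν : Measure X))
    exact this
  have hintconst : ∀ (ν : ProbabilityMeasure X) (f : C(X, ℝ)) (c : ℝ),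
      ∫ x, (-(f x) + c) ∂(ν : Measure X) = c - ∫ x, f x ∂(ν : Measure X) := by
    intro ν f c
    have h1 : Integrable (fun x => -(f x)) (ν : Measure X) := (hint ν f).neg
    rw [integral_add h1 (integrable_const c), integral_neg, integral_const]
    simp [measure_univ]
    ring
  have hupper : ∀ ν : ProbabilityMeasure X,
      entropyLike Γ ν ≤ ((Γ φ - ∫ x, φ x ∂(ν : Measure X) : ℝ) : EReal) := by
    intro ν
    apply sInf_le
    refine ⟨-φ + ContinuousMap.const X (Γ φ), ?_, ?_⟩
    · have hneg : -(-φ + ContinuousMap.const X (Γ φ)) = φ + ContinuousMap.const X (-(Γ φ)) := by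
        ext x
        simp only [ContinuousMap.neg_apply, ContinuousMap.add_apply, ContinuousMap.const_apply]
        ring
      rw [hneg, hΓ.2.1]
      linarith
    · have : ∫ x, (-φ + ContinuousMap.const X (Γ φ)) x ∂(ν : Measure X)
          = Γ φ - ∫ x, φ x ∂(ν : Measure X) := by
        have heq : (fun x => (-φ + ContinuousMap.const X (Γ φ)) x)
            = fun x => -(φ x) + Γ φ := by
          funext x
          simp only [ContinuousMap.add_apply, ContinuousMap.neg_apply,
            ContinuousMap.const_apply]
        rw [heq, hintconst ν φ (Γ φ)]
      rw [this]
  have hlow : ∀ ψ : C(X, ℝ), Γ (-ψ) ≤ 0 →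
      (Γ φ - ∫ x, φ x ∂(μ : Measure X)) ≤ ∫ x, ψ x ∂(μ : Measure X) := by
    intro ψ hψ
    have h1 : L (-ψ - φ) ≤ Γ (φ + (-ψ - φ)) - Γ φ := hLsub _
    have h2 : φ + (-ψ - φ) = -ψ := by
      ext x
      simp only [ContinuousMap.add_apply, ContinuousMap.sub_apply, ContinuousMap.neg_apply]
      ring
    rw [h2] at h1
    have h3 : L (-ψ - φ) = -(L ψ) - L φ := by rw [map_sub, map_neg]
    have h4 : ∫ x, ψ x ∂(μ : Measure X) = L ψ := by rw [hμcoe]; exact hrepr ψ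
    have h5 : ∫ x, φ x ∂(μ : Measure X) = L φ := by rw [hμcoe]; exact hrepr φ
    rw [h3] at h1
    rw [h4, h5]
    linarith
  have hent : entropyLike Γ μ = ((Γ φ - ∫ x, φ x ∂(μ : Measure X) : ℝ) : EReal) := by
    apply le_antisymm (hupper μ)
    apply le_sInf
    rintro r ⟨ψ, hψ, rfl⟩
    exact EReal.coe_le_coe_iff.2 (hlow ψ hψ)
  refine ⟨μ, ?_, ?_⟩
  · rw [hent, ← EReal.coe_add]
    congr 1
    ring
  · intro ν
    calc entropyLike Γ ν + ((∫ x, φ x ∂(ν : Measure X) : ℝ) : EReal)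
        ≤ ((Γ φ - ∫ x, φ x ∂(ν : Measure X) : ℝ) : EReal)
            + ((∫ x, φ x ∂(ν : Measure X) : ℝ) : EReal) := add_le_add_left (hupper ν) _
      _ = ((Γ φ : ℝ) : EReal) := by
          rw [← EReal.coe_add]
          congr 1
          ring
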